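/- Let M be a real symmetric positive semidefinite d×d matrix whose largest eigenvalue λ₁ = λ_max(M) is simple, i.e. the eigenspace { v ∈ ℝ^d : M v = λ₁ v } is one-dimensional. If Δ is a real PSD matrix with trace(Δ) = 1 and trace(M·Δ) = λ₁, then Δ = v vᵀ for a unit eigenvector v of M associated with λ₁; in particular every maximizer Δ of trace(M·Δ) over the trace-one PSD spectraplex is rank-one. (Rank-one maximizer lemma used in the proof of Theorem 2, part 1.) -/

import Mathlib

open Matrix

lemma aux_trace_conjTranspose_mul_self_eq_zero {m n : ℕ} {B : Matrix (Fin m) (Fin n) ℝ}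
    (h : (Bᴴ * B).trace = 0) : B = 0 := by
  have h' : ∑ k, (Bᴴ * B) k k = 0 := h
  have hnn : ∀ k, 0 ≤ (Bᴴ * B) k k := fun k => by
    simp only [Matrix.mul_apply, Matrix.conjTranspose_apply, star_trivial]
    exact Finset.sum_nonneg fun l _ => mul_self_nonneg (B l k)
  ext i j
  have h1 := (Finset.sum_eq_zero_iff_of_nonneg (fun k _ => hnn k)).mp h' j (Finset.mem_univ j)
  have h2 : ∑ l, B l j * B l j = 0 := by
    simpa [Matrix.mul_apply, Matrix.conjTranspose_apply] using h1
  have h3 := (Finset.sum_eq_zero_iff_of_nonneg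
    (fun l _ => mul_self_nonneg (B l j))).mp h2 i (Finset.mem_univ i)
  simpa using mul_self_eq_zero.mp h3

open scoped MatrixOrder in
lemma aux_psd_mul_eq_zero_of_trace_eq_zero {d : ℕ} {N D : Matrix (Fin d) (Fin d) ℝ}
    (hN : N.PosSemidef) (hD : D.PosSemidef) (h : (N * D).trace = 0) : N * D = 0 := by
  set S := CFC.sqrt D with hSdef
  have hS : S.PosSemidef := (CFC.sqrt_nonneg D).posSemidef
  have hSS : S * S = D := CFC.sqrt_mul_sqrt_self D hD.nonneg
  set Q := CFC.sqrt N with hQdef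
  have hQ : Q.PosSemidef := (CFC.sqrt_nonneg N).posSemidef
  have hQQ : Q * Q = N := CFC.sqrt_mul_sqrt_self N hN.nonneg
  have key : (Q * S)ᴴ * (Q * S) = S * N * S := by
    rw [conjTranspose_mul, hS.1, hQ.1, ← hQQ]
    noncomm_ring
  have htr0 : ((Q * S)ᴴ * (Q * S)).trace = 0 := by
    rw [key]
    calc (S * N * S).trace = (S * (S * N)).trace := by rw [Matrix.trace_mul_comm]
    _ = (N * D).trace := by rw [← Matrix.mul_assoc, hSS, Matrix.trace_mul_comm]
    _ = 0 := h
  have hQS : Q * S = 0 := aux_trace_conjTranspose_mul_self_eq_zero htr0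
  have hNS : N * S = 0 := by rw [← hQQ, Matrix.mul_assoc, hQS, mul_zero]
  rw [← hSS, ← Matrix.mul_assoc, hNS, zero_mul]

open Matrix




/-- **Rank-one maximizer lemma (proof of Theorem 2, part 1).** If the largest eigenvalue
`λ₁` of a real symmetric PSD matrix `M` is simple, then every maximizer `Δ` of
`trace(M·Δ)` over the trace-one PSD spectraplex is the rank-one outer product `v vᵀ` of a
unit top eigenvector `v` of `M`. -/
theorem spectraplex_maximizer_rank_one_of_simple_top_eigenvalue
    {d : ℕ} (M : Matrix (Fin d) (Fin d) ℝ) (hpsd : M.PosSemidef)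
    (lam1 : ℝ) (hlam1 : lam1 = ⨆ i, hpsd.1.eigenvalues i)
    (hsimple :
      Module.finrank ℝ (Module.End.eigenspace (Matrix.toLin' M) lam1) = 1)
    (Δ : Matrix (Fin d) (Fin d) ℝ) (hΔ : Δ.PosSemidef) (htr : Δ.trace = 1)
    (hmax : (M * Δ).trace = lam1) :
    ∃ v : EuclideanSpace ℝ (Fin d), ‖v‖ = 1 ∧
      M.mulVec v = lam1 • (v : Fin d → ℝ) ∧
      Δ = Matrix.vecMulVec v v ∧ Δ.rank = 1 := by
  classical
  have hM := hpsd.1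
  set U : Matrix (Fin d) (Fin d) ℝ := (hM.eigenvectorUnitary : Matrix (Fin d) (Fin d) ℝ) with hU
  have hspec : M = U * diagonal hM.eigenvalues * star U := by
    have := hM.spectral_theorem
    simpa using this
  have hle : ∀ i, hM.eigenvalues i ≤ lam1 := fun i =>
    hlam1 ▸ le_ciSup (Set.Finite.bddAbove (Set.finite_range _)) i
  set N := lam1 • (1 : Matrix (Fin d) (Fin d) ℝ) - M with hNdef
  have hUU : U * star U = 1 := Matrix.mem_unitaryGroup_iff.mp hM.eigenvectorUnitary.2
  have hNeq : N = U * diagonal (fun i => lam1 - hM.eigenvalues i) * star U := by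
    have h2 : U * diagonal (fun _ : Fin d => lam1) * star U = lam1 • 1 := by
      rw [← Matrix.smul_one_eq_diagonal, Matrix.mul_smul, mul_one, Matrix.smul_mul, hUU]
    rw [← diagonal_sub, Matrix.mul_sub, Matrix.sub_mul, h2, ← hspec]
  have hNpsd : N.PosSemidef := by
    rw [hNeq, Matrix.star_eq_conjTranspose]
    exact (Matrix.posSemidef_diagonal_iff.mpr fun i =>
      sub_nonneg.mpr (hle i)).mul_mul_conjTranspose_same U
  have hNtr : (N * Δ).trace = 0 := by
    rw [hNdef, Matrix.sub_mul, Matrix.smul_mul, Matrix.one_mul, Matrix.trace_sub,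
      Matrix.trace_smul, htr, hmax, smul_eq_mul, mul_one, sub_self]
  have hNΔ : N * Δ = 0 := aux_psd_mul_eq_zero_of_trace_eq_zero hNpsd hΔ hNtr
  have hMD : M * Δ = lam1 • Δ := by
    have h := hNΔ
    rw [hNdef, Matrix.sub_mul, sub_eq_zero, Matrix.smul_mul, Matrix.one_mul] at h
    exact h.symm
  -- generator of the eigenspace
  obtain ⟨v₀, hv₀ne, hv₀span⟩ := finrank_eq_one_iff'.mp hsimple
  set u : Fin d → ℝ := (v₀ : Fin d → ℝ) with hu
  have hu0 : u ≠ 0 := fun h => hv₀ne (Subtype.ext h)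
  have huEig : M.mulVec u = lam1 • u := by
    have h := v₀.2
    rwa [Module.End.mem_eigenspace_iff, Matrix.toLin'_apply] at h
  have hcol : ∀ j, (fun i => Δ i j) ∈ Module.End.eigenspace (Matrix.toLin' M) lam1 := by
    intro j
    rw [Module.End.mem_eigenspace_iff, Matrix.toLin'_apply]
    funext i
    have h := congrFun (congrFun hMD i) j
    simpa [Matrix.mul_apply, Matrix.mulVec, dotProduct] using h
  choose c hc using fun j => hv₀span ⟨_, hcol j⟩
  have hc' : ∀ i j, Δ i j = c j * u i := by
    intro i j
    have h := congrArg Subtype.val (hc j)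
    exact (congrFun h i).symm
  have hsym : ∀ i j, Δ j i = Δ i j := by
    intro i j
    have h := congrFun (congrFun hΔ.1 i) j
    simpa [Matrix.conjTranspose_apply] using h
  obtain ⟨i₀, hi₀⟩ := Function.ne_iff.mp hu0
  simp only [Pi.zero_apply] at hi₀
  set t : ℝ := c i₀ / u i₀ with ht
  have hct : ∀ j, c j = t * u j := by
    intro j
    have h : c j * u i₀ = c i₀ * u j := by
      have := (hc' i₀ j).symm.trans ((hsym i₀ j).symm.trans (hc' j i₀))
      linarith [this]
    rw [ht]
    field_simp
    linarith [h]
  have hΔent : ∀ i j, Δ i j = t * u i * u j := by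
    intro i j
    rw [hc' i j, hct j]; ring
  set S : ℝ := ∑ i, u i * u i with hS
  have hSpos : 0 < S := by
    apply Finset.sum_pos' (fun i _ => mul_self_nonneg (u i))
    exact ⟨i₀, Finset.mem_univ _, mul_self_pos.mpr hi₀⟩
  have htS : t * S = 1 := by
    have h : (1 : ℝ) = ∑ i, t * u i * u i := by
      rw [← htr]
      simp only [Matrix.trace, Matrix.diag]
      exact Finset.sum_congr rfl fun i _ => hΔent i i
    rw [hS, Finset.mul_sum, h]
    exact Finset.sum_congr rfl fun i _ => by ring
  have htpos : 0 < t := by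
    rcases lt_trichotomy t 0 with h | h | h
    · nlinarith
    · rw [h, zero_mul] at htS; norm_num at htS
    · exact h
  set v : EuclideanSpace ℝ (Fin d) := WithLp.toLp 2 fun i => Real.sqrt t * u i with hv
  have hvapp : ∀ i, v i = Real.sqrt t * u i := fun i => rfl
  have hsq : Real.sqrt t * Real.sqrt t = t := Real.mul_self_sqrt htpos.le
  have hΔv : ∀ i j, Δ i j = v i * v j := by
    intro i j
    rw [hΔent i j, hvapp, hvapp]
    calc t * u i * u j = (Real.sqrt t * Real.sqrt t) * u i * u j := by rw [hsq]
    _ = Real.sqrt t * u i * (Real.sqrt t * u j) := by ring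
  have hnorm : ‖v‖ = 1 := by
    rw [EuclideanSpace.norm_eq]
    have h : ∑ i, ‖v i‖ ^ 2 = t * S := by
      rw [hS, Finset.mul_sum]
      refine Finset.sum_congr rfl fun i _ => ?_
      rw [hvapp, Real.norm_eq_abs, sq_abs]
      calc (Real.sqrt t * u i) ^ 2 = (Real.sqrt t * Real.sqrt t) * (u i * u i) := by ring
      _ = t * (u i * u i) := by rw [hsq]
    rw [h, htS, Real.sqrt_one]
  have hvi₀ : v i₀ ≠ 0 := by
    rw [hvapp]
    have : Real.sqrt t > 0 := Real.sqrt_pos.mpr htpos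
    exact mul_ne_zero this.ne' hi₀
  refine ⟨v, hnorm, ?_, ?_, ?_⟩
  · -- eigenvector
    funext i
    have h := congrFun huEig i
    simp only [Matrix.mulVec, dotProduct, Pi.smul_apply, smul_eq_mul] at h ⊢
    calc ∑ j, M i j * v j = Real.sqrt t * ∑ j, M i j * u j := by
          rw [Finset.mul_sum]; exact Finset.sum_congr rfl fun j _ => by rw [hvapp]; ring
    _ = Real.sqrt t * (lam1 * u i) := by rw [h]
    _ = lam1 * v i := by rw [hvapp]; ring
  · ext i j
    rw [Matrix.vecMulVec_apply, hΔv i j]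
  · -- rank
    have hΔeq : Δ = Matrix.vecMulVec v v := by
      ext i j; rw [Matrix.vecMulVec_apply, hΔv i j]
    have hvne : (v : Fin d → ℝ) ≠ 0 := by
      intro h
      exact hvi₀ (congrFun h i₀)
    rw [hΔeq, Matrix.rank_eq_finrank_span_cols]
    have hspan : Submodule.span ℝ (Set.range (Matrix.vecMulVec v v)ᵀ) =
        Submodule.span ℝ {(v : Fin d → ℝ)} := by
      apply le_antisymm
      · rw [Submodule.span_le]
        rintro x ⟨j, rfl⟩
        rw [SetLike.mem_coe, Submodule.mem_span_singleton]
        refine ⟨v j, ?_⟩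
        funext i
        simp only [Pi.smul_apply, smul_eq_mul, Matrix.transpose_apply,
          Matrix.vecMulVec_apply]
        ring
      · rw [Submodule.span_le, Set.singleton_subset_iff, SetLike.mem_coe]
        have hmem : (Matrix.vecMulVec v v)ᵀ i₀ ∈ Submodule.span ℝ (Set.range (Matrix.vecMulVec v v)ᵀ) :=
          Submodule.subset_span ⟨i₀, rfl⟩
        have h2 : ((v i₀)⁻¹ • (Matrix.vecMulVec v v)ᵀ i₀ : Fin d → ℝ) = v := by
          funext i
          simp only [Pi.smul_apply, smul_eq_mul, Matrix.transpose_apply,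
            Matrix.vecMulVec_apply]
          calc (v i₀)⁻¹ * (v i * v i₀) = v i * ((v i₀)⁻¹ * v i₀) := by ring
          _ = v i := by rw [inv_mul_cancel₀ hvi₀, mul_one]
        have h3 := Submodule.smul_mem _ (v i₀)⁻¹ hmem
        rwa [h2] at h3
    rw [show (Matrix.vecMulVec (v : Fin d → ℝ) v).col = (Matrix.vecMulVec (v : Fin d → ℝ) v)ᵀ from rfl, hspan]
    exact finrank_span_singleton (K := ℝ) (v := (v : Fin d → ℝ)) hvne
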